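/- arXiv:2011.01206 — 3 statements merged into one kernel-verified Lean document; each statement's English description precedes it below -/
import Mathlib

section
/- Let k_xy, k_yx, k_yz, k_zy, k_out, p, q, r be positive real numbers and x_in > 0. Define x_st = √((x_in/(k_xy·p))·(1 + (k_yx/k_yz)·(1 + k_zy/k_out))), y_st = √((x_in/(k_yz·q))·(1 + k_zy/k_out)), z_st = √(x_in/(k_out·r)). Then (x_st, y_st, z_st) is a fixed point of the map Φ1, i.e. Φ1(x_st, y_st, z_st) = (x_st, y_st, z_st). -/
/-- The three-level filter model map `Φ1 : ℝ³ → ℝ³`. -/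
def Phi1 (kxy kyx kyz kzy kout p q r xin : ℝ) :
    ℝ × ℝ × ℝ → ℝ × ℝ × ℝ :=
  fun ⟨x, y, z⟩ =>
    ( x - kxy * p * x ^ 2 + kyx * q * y ^ 2 + xin,
      y + kxy * p * x ^ 2 - (kyx + kyz) * q * y ^ 2 + kzy * r * z ^ 2,
      z + kyz * q * y ^ 2 - (kzy + kout) * r * z ^ 2 )

theorem stationary_point_is_fixed
    (kxy kyx kyz kzy kout p q r xin : ℝ)
    (hkxy : 0 < kxy) (hkyx : 0 < kyx) (hkyz : 0 < kyz) (hkzy : 0 < kzy)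
    (hkout : 0 < kout) (hp : 0 < p) (hq : 0 < q) (hr : 0 < r) (hxin : 0 < xin) :
    Phi1 kxy kyx kyz kzy kout p q r xin
      ( Real.sqrt ((xin / (kxy * p)) * (1 + (kyx / kyz) * (1 + kzy / kout))),
        Real.sqrt ((xin / (kyz * q)) * (1 + kzy / kout)),
        Real.sqrt (xin / (kout * r)) ) =
      ( Real.sqrt ((xin / (kxy * p)) * (1 + (kyx / kyz) * (1 + kzy / kout))),
        Real.sqrt ((xin / (kyz * q)) * (1 + kzy / kout)),
        Real.sqrt (xin / (kout * r)) ) := by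
  have h1 : (0:ℝ) ≤ (xin / (kxy * p)) * (1 + (kyx / kyz) * (1 + kzy / kout)) := by
    positivity
  have h2 : (0:ℝ) ≤ (xin / (kyz * q)) * (1 + kzy / kout) := by positivity
  have h3 : (0:ℝ) ≤ xin / (kout * r) := by positivity
  simp only [Phi1, Real.sq_sqrt h1, Real.sq_sqrt h2, Real.sq_sqrt h3, Prod.mk.injEq]
  refine ⟨?_, ?_, ?_⟩ <;> field_simp <;> ring
end

section
/- Let k_xy, k_yx, k_yz, k_zy, k_out, p, q, r be positive real numbers and x_in > 0. The map Φ1 has exactly one fixed point (x, y, z) with x ≥ 0, y ≥ 0 and z ≥ 0, namely x = √((x_in/(k_xy·p))·(1 + (k_yx/k_yz)·(1 + k_zy/k_out))), y = √((x_in/(k_yz·q))·(1 + k_zy/k_out)), z = √(x_in/(k_out·r)). -/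
theorem unique_nonneg_fixed_point_Phi1
    (kxy kyx kyz kzy kout p q r xin : ℝ)
    (hkxy : 0 < kxy) (hkyx : 0 < kyx) (hkyz : 0 < kyz) (hkzy : 0 < kzy)
    (hkout : 0 < kout) (hp : 0 < p) (hq : 0 < q) (hr : 0 < r) (hxin : 0 < xin)
    (x y z : ℝ) :
    (Phi1 kxy kyx kyz kzy kout p q r xin (x, y, z) = (x, y, z) ∧
      0 ≤ x ∧ 0 ≤ y ∧ 0 ≤ z) ↔
    (x = Real.sqrt ((xin / (kxy * p)) * (1 + (kyx / kyz) * (1 + kzy / kout))) ∧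
     y = Real.sqrt ((xin / (kyz * q)) * (1 + kzy / kout)) ∧
     z = Real.sqrt (xin / (kout * r))) := by
  have hA0 : (0:ℝ) ≤ (xin / (kxy * p)) * (1 + (kyx / kyz) * (1 + kzy / kout)) := by
    positivity
  have hB0 : (0:ℝ) ≤ (xin / (kyz * q)) * (1 + kzy / kout) := by positivity
  have hC0 : (0:ℝ) ≤ xin / (kout * r) := by positivity
  constructor
  · rintro ⟨heq, hx, hy, hz⟩
    simp only [Phi1, Prod.mk.injEq] at heq
    obtain ⟨e1, e2, e3⟩ := heq
    have hz2 : kout * r * z ^ 2 = xin := by linear_combination -e1 - e2 - e3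
    have hy2 : kyz * q * y ^ 2 = xin + kzy * r * z ^ 2 := by linear_combination -e1 - e2
    have hx2 : kxy * p * x ^ 2 = xin + kyx * q * y ^ 2 := by linear_combination -e1
    have hz2' : z ^ 2 = xin / (kout * r) := by
      field_simp
      linear_combination hz2
    have hy2' : y ^ 2 = (xin / (kyz * q)) * (1 + kzy / kout) := by
      field_simp
      linear_combination kout * hy2 + kzy * hz2
    have hx2' : x ^ 2 = (xin / (kxy * p)) * (1 + (kyx / kyz) * (1 + kzy / kout)) := by
      field_simp
      linear_combination kyz * kout * hx2 + kyx * kout * hy2 + kyx * kzy * hz2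
    refine ⟨?_, ?_, ?_⟩
    · rw [← hx2', Real.sqrt_sq hx]
    · rw [← hy2', Real.sqrt_sq hy]
    · rw [← hz2', Real.sqrt_sq hz]
  · rintro ⟨hx, hy, hz⟩
    subst hx hy hz
    have hA := Real.sq_sqrt hA0
    have hB := Real.sq_sqrt hB0
    have hC := Real.sq_sqrt hC0
    refine ⟨?_, Real.sqrt_nonneg _, Real.sqrt_nonneg _, Real.sqrt_nonneg _⟩
    simp only [Phi1, Prod.mk.injEq, hA, hB, hC]
    refine ⟨?_, ?_, ?_⟩ <;> field_simp <;> ring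
end

section
/- Let k_xy, k_yx, k_yz, k_zy, k_zw, k_wz, k_out, p, q, r, s be positive real numbers and x_in > 0. The map Φ has exactly one fixed point (x, y, z, w) with x ≥ 0, y ≥ 0, z ≥ 0 and w ≥ 0, namely x = √((x_in/(k_xy·p))·(1 + (k_yx/k_yz)·(1 + (k_zy/k_zw)·(1 + k_wz/k_out)))), y = √((x_in/(k_yz·q))·(1 + (k_zy/k_zw)·(1 + k_wz/k_out))), z = √((x_in/(k_zw·r))·(1 + k_wz/k_out)), w = √(x_in/(k_out·s)). -/
/-- The four-level filter model map `Φ : ℝ⁴ → ℝ⁴`. -/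
def Phi (kxy kyx kyz kzy kzw kwz kout p q r s xin : ℝ) :
    ℝ × ℝ × ℝ × ℝ → ℝ × ℝ × ℝ × ℝ :=
  fun ⟨x, y, z, w⟩ =>
    ( x - kxy * p * x ^ 2 + kyx * q * y ^ 2 + xin,
      y + kxy * p * x ^ 2 - (kyx + kyz) * q * y ^ 2 + kzy * r * z ^ 2,
      z + kyz * q * y ^ 2 - (kzy + kzw) * r * z ^ 2 + kwz * s * w ^ 2,
      w + kzw * r * z ^ 2 - (kwz + kout) * s * w ^ 2 )

theorem unique_nonneg_fixed_point_Phi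
    (kxy kyx kyz kzy kzw kwz kout p q r s xin : ℝ)
    (hkxy : 0 < kxy) (hkyx : 0 < kyx) (hkyz : 0 < kyz) (hkzy : 0 < kzy)
    (hkzw : 0 < kzw) (hkwz : 0 < kwz) (hkout : 0 < kout)
    (hp : 0 < p) (hq : 0 < q) (hr : 0 < r) (hs : 0 < s) (hxin : 0 < xin)
    (x y z w : ℝ) :
    (Phi kxy kyx kyz kzy kzw kwz kout p q r s xin (x, y, z, w) = (x, y, z, w) ∧
      0 ≤ x ∧ 0 ≤ y ∧ 0 ≤ z ∧ 0 ≤ w) ↔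
    (x = Real.sqrt ((xin / (kxy * p)) *
            (1 + (kyx / kyz) * (1 + (kzy / kzw) * (1 + kwz / kout)))) ∧
     y = Real.sqrt ((xin / (kyz * q)) * (1 + (kzy / kzw) * (1 + kwz / kout))) ∧
     z = Real.sqrt ((xin / (kzw * r)) * (1 + kwz / kout)) ∧
     w = Real.sqrt (xin / (kout * s))) := by
  have hA : (0:ℝ) ≤ (xin / (kxy * p)) *
      (1 + (kyx / kyz) * (1 + (kzy / kzw) * (1 + kwz / kout))) := by positivity
  have hB : (0:ℝ) ≤ (xin / (kyz * q)) * (1 + (kzy / kzw) * (1 + kwz / kout)) := by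
    positivity
  have hC : (0:ℝ) ≤ (xin / (kzw * r)) * (1 + kwz / kout) := by positivity
  have hD : (0:ℝ) ≤ xin / (kout * s) := by positivity
  constructor
  · rintro ⟨hfix, hx, hy, hz, hw⟩
    simp only [Phi, Prod.mk.injEq] at hfix
    obtain ⟨e1, e2, e3, e4⟩ := hfix
    have w' : kout * s * w ^ 2 = xin := by linarith [e1, e2, e3, e4]
    have z' : kzw * r * kout * z ^ 2 = xin * (kout + kwz) := by
      linear_combination kout * e4 + (kwz + kout) * w'
    have y' : kyz * q * kzw * kout * y ^ 2 = xin * (kzw * kout + kzy * (kout + kwz)) := by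
      linear_combination kzw * kout * e3 + (kzy + kzw) * z' - kwz * kzw * w'
    have x' : kxy * p * kyz * kzw * kout * x ^ 2 =
        xin * (kyz * kzw * kout + kyx * (kzw * kout + kzy * (kout + kwz))) := by
      linear_combination (-(kyz * kzw * kout)) * e1 + kyx * y'
    have hw2 : w ^ 2 = xin / (kout * s) := by
      field_simp; linear_combination w'
    have hz2 : z ^ 2 = (xin / (kzw * r)) * (1 + kwz / kout) := by
      field_simp; linear_combination z'
    have hy2 : y ^ 2 = (xin / (kyz * q)) * (1 + (kzy / kzw) * (1 + kwz / kout)) := by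
      field_simp; linear_combination y'
    have hx2 : x ^ 2 = (xin / (kxy * p)) *
        (1 + (kyx / kyz) * (1 + (kzy / kzw) * (1 + kwz / kout))) := by
      field_simp; linear_combination x'
    refine ⟨?_, ?_, ?_, ?_⟩
    · rw [← hx2]; exact (Real.sqrt_sq hx).symm
    · rw [← hy2]; exact (Real.sqrt_sq hy).symm
    · rw [← hz2]; exact (Real.sqrt_sq hz).symm
    · rw [← hw2]; exact (Real.sqrt_sq hw).symm
  · rintro ⟨hx, hy, hz, hw⟩
    subst hx hy hz hw
    set A := (xin / (kxy * p)) *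
        (1 + (kyx / kyz) * (1 + (kzy / kzw) * (1 + kwz / kout))) with hAdef
    set B := (xin / (kyz * q)) * (1 + (kzy / kzw) * (1 + kwz / kout)) with hBdef
    set C := (xin / (kzw * r)) * (1 + kwz / kout) with hCdef
    set D := xin / (kout * s) with hDdef
    have hD' : kout * s * Real.sqrt D ^ 2 = xin := by
      rw [Real.sq_sqrt hD, hDdef]; field_simp
    have hC' : kzw * r * Real.sqrt C ^ 2 = xin + kwz * s * Real.sqrt D ^ 2 := by
      rw [Real.sq_sqrt hC, Real.sq_sqrt hD, hCdef, hDdef]; field_simp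
    have hB' : kyz * q * Real.sqrt B ^ 2 = xin + kzy * r * Real.sqrt C ^ 2 := by
      rw [Real.sq_sqrt hB, Real.sq_sqrt hC, hBdef, hCdef]; field_simp
    have hA' : kxy * p * Real.sqrt A ^ 2 = xin + kyx * q * Real.sqrt B ^ 2 := by
      rw [Real.sq_sqrt hA, Real.sq_sqrt hB, hAdef, hBdef]; field_simp
    refine ⟨?_, Real.sqrt_nonneg _, Real.sqrt_nonneg _, Real.sqrt_nonneg _,
      Real.sqrt_nonneg _⟩
    simp only [Phi, Prod.mk.injEq]
    refine ⟨?_, ?_, ?_, ?_⟩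
    · linear_combination -hA'
    · linear_combination hA' - hB'
    · linear_combination hB' - hC'
    · linear_combination hC' - hD'
end
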